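/- arXiv:math/0307340 — 2 statements merged into one kernel-verified Lean document; each statement's English description precedes it below -/
import Mathlib

section
/- For every rational number s < -1 there exist a unique natural number n and a unique finite sequence of integers d_0, d_1, ..., d_n with d_i ≤ -2 for every i, such that s = [d_0, d_1, ..., d_n]. -/
def negCF : List ℤ → ℚ
  | [] => 0
  | [d] => (d : ℚ)
  | d :: l => (d : ℚ) - 1 / negCF l

lemma negCF_cons (d : ℤ) (l : List ℤ) (h : l ≠ []) :
    negCF (d :: l) = (d : ℚ) - 1 / negCF l := by
  cases l with
  | nil => exact absurd rfl h
  | cons a t => rfl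

lemma negCF_bounds : ∀ (l : List ℤ) (h : l ≠ []), (∀ d ∈ l, d ≤ -2) →
    (l.head h : ℚ) ≤ negCF l ∧ negCF l < l.head h + 1
  | [], h, _ => absurd rfl h
  | [d], _, _ => by simp [negCF]
  | d :: a :: t, _, hd => by
    have ih := negCF_bounds (a :: t) (by simp)
      (fun x hx => hd x (List.mem_cons_of_mem _ hx))
    have ha : a ≤ -2 := hd a (by simp)
    simp only [List.head_cons] at ih
    have hlt : negCF (a :: t) < -1 := by
      have : (a : ℚ) ≤ -2 := by exact_mod_cast ha
      linarith [ih.2]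
    have hne : negCF (a :: t) < 0 := by linarith
    have h1 : -1 < 1 / negCF (a :: t) := by
      rw [lt_div_iff_of_neg hne]; linarith
    have h2 : 1 / negCF (a :: t) < 0 := div_neg_of_pos_of_neg one_pos hne
    rw [negCF_cons d (a :: t) (by simp)]
    constructor
    · simp only [List.head_cons]; linarith
    · simp only [List.head_cons]; linarith

lemma negCF_lt_neg_one (l : List ℤ) (h : l ≠ []) (hd : ∀ d ∈ l, d ≤ -2) :
    negCF l < -1 := by
  have hb := negCF_bounds l h hd
  have : l.head h ≤ -2 := hd _ (List.head_mem h)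
  have : ((l.head h : ℚ)) ≤ -2 := by exact_mod_cast this
  linarith [hb.2]

lemma negCF_unique : ∀ (l₁ l₂ : List ℤ), l₁ ≠ [] → l₂ ≠ [] →
    (∀ d ∈ l₁, d ≤ -2) → (∀ d ∈ l₂, d ≤ -2) → negCF l₁ = negCF l₂ → l₁ = l₂ := by
  intro l₁
  induction l₁ with
  | nil => intro _ h; exact absurd rfl h
  | cons d₁ t₁ ih =>
    intro l₂ _ h₂ hd₁ hd₂ heq
    cases l₂ with
    | nil => exact absurd rfl h₂
    | cons d₂ t₂ =>
      have b₁ := negCF_bounds (d₁ :: t₁) (by simp) hd₁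
      have b₂ := negCF_bounds (d₂ :: t₂) (by simp) hd₂
      simp only [List.head_cons] at b₁ b₂
      rw [heq] at b₁
      have hdd : d₁ = d₂ := by
        have h1 : (d₁ : ℚ) < d₂ + 1 := lt_of_le_of_lt b₁.1 b₂.2
        have h2 : (d₂ : ℚ) < d₁ + 1 := lt_of_le_of_lt b₂.1 b₁.2
        have h1' : d₁ < d₂ + 1 := by exact_mod_cast h1
        have h2' : d₂ < d₁ + 1 := by exact_mod_cast h2
        omega
      subst hdd
      have htt : t₁ = t₂ := by
        cases t₁ with
        | nil =>
          cases t₂ with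
          | nil => rfl
          | cons a₂ s₂ =>
            exfalso
            rw [negCF_cons d₁ (a₂ :: s₂) (by simp)] at heq
            have hv : negCF (a₂ :: s₂) < -1 := negCF_lt_neg_one _ (by simp)
              (fun x hx => hd₂ x (List.mem_cons_of_mem _ hx))
            have : 1 / negCF (a₂ :: s₂) < 0 :=
              div_neg_of_pos_of_neg one_pos (by linarith)
            simp only [negCF] at heq
            linarith [heq]
        | cons a₁ s₁ =>
          cases t₂ with
          | nil =>
            exfalso
            rw [negCF_cons d₁ (a₁ :: s₁) (by simp)] at heq
            have hv : negCF (a₁ :: s₁) < -1 := negCF_lt_neg_one _ (by simp)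
              (fun x hx => hd₁ x (List.mem_cons_of_mem _ hx))
            have : 1 / negCF (a₁ :: s₁) < 0 :=
              div_neg_of_pos_of_neg one_pos (by linarith)
            simp only [negCF] at heq
            linarith [heq]
          | cons a₂ s₂ =>
            have hv₁ : negCF (a₁ :: s₁) < -1 := negCF_lt_neg_one _ (by simp)
              (fun x hx => hd₁ x (List.mem_cons_of_mem _ hx))
            have hv₂ : negCF (a₂ :: s₂) < -1 := negCF_lt_neg_one _ (by simp)
              (fun x hx => hd₂ x (List.mem_cons_of_mem _ hx))
            rw [negCF_cons d₁ (a₁ :: s₁) (by simp),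
              negCF_cons d₁ (a₂ :: s₂) (by simp)] at heq
            have : negCF (a₁ :: s₁) = negCF (a₂ :: s₂) := by
              have h1 : 1 / negCF (a₁ :: s₁) = 1 / negCF (a₂ :: s₂) := by linarith
              rw [div_eq_div_iff (by linarith) (by linarith)] at h1
              linarith
            exact ih (a₂ :: s₂) (by simp) (by simp)
              (fun x hx => hd₁ x (List.mem_cons_of_mem _ hx))
              (fun x hx => hd₂ x (List.mem_cons_of_mem _ hx)) this
      rw [htt]

lemma den_sub_intCast (q : ℚ) (n : ℤ) : (q - (n : ℚ)).den = q.den := by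
  refine Nat.dvd_antisymm ?_ ?_
  · have := Rat.add_den_dvd q (-(n:ℚ))
    simpa [sub_eq_add_neg] using this
  · have := Rat.add_den_dvd (q - (n:ℚ)) (n:ℚ)
    simpa using this

lemma den_inv_le (q : ℚ) (hq : 0 < q) : (q⁻¹).den ≤ q.num.natAbs := by
  have h := Rat.den_dvd (q.den : ℤ) q.num
  rw [← Rat.inv_def] at h
  have hnum : q.num ≠ 0 := by
    exact ne_of_gt (Rat.num_pos.mpr hq)
  exact Nat.le_of_dvd (Int.natAbs_pos.mpr hnum) (Int.natCast_dvd_natCast.mp (by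
    simpa [Int.dvd_natAbs] using h))

lemma negCF_exists : ∀ (n : ℕ) (s : ℚ), s.den ≤ n → s < -1 →
    ∃ l : List ℤ, l ≠ [] ∧ (∀ d ∈ l, d ≤ -2) ∧ negCF l = s := by
  intro n
  induction n with
  | zero => intro s hden _; exact absurd hden (by have := s.pos; omega)
  | succ n ih =>
    intro s hden hs
    have hfloor : ⌊s⌋ ≤ -2 := by
      have h1 : (⌊s⌋ : ℚ) ≤ s := Int.floor_le s
      have : (⌊s⌋ : ℚ) < -1 := lt_of_le_of_lt h1 hs
      have : ⌊s⌋ < -1 := by exact_mod_cast this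
      omega
    by_cases hf : Int.fract s = 0
    · refine ⟨[⌊s⌋], by simp, by simpa using hfloor, ?_⟩
      have : s - ⌊s⌋ = 0 := hf
      simp only [negCF]
      linarith
    · set f := Int.fract s with hfdef
      have hf0 : 0 < f := lt_of_le_of_ne (Int.fract_nonneg s) (Ne.symm hf)
      have hf1 : f < 1 := Int.fract_lt_one s
      set t : ℚ := -f⁻¹ with htdef
      have hinv : 1 < f⁻¹ := one_lt_inv_iff₀.mpr ⟨hf0, hf1⟩
      have ht : t < -1 := by rw [htdef]; linarith
      have hfden : f.den = s.den := by
        rw [hfdef, Int.fract]; exact den_sub_intCast s ⌊s⌋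
      have htden : t.den ≤ n := by
        have h1 : t.den = (f⁻¹).den := by rw [htdef, Rat.neg_den]
        have h2 : (f⁻¹).den ≤ f.num.natAbs := den_inv_le f hf0
        have h3 : f.num < f.den := Rat.num_lt_denom_iff.mpr hf1
        have h4 : 0 < f.num := Rat.num_pos.mpr hf0
        have : f.num.natAbs < f.den := by omega
        omega
      obtain ⟨l, hl, hl2, hl3⟩ := ih t htden ht
      refine ⟨⌊s⌋ :: l, by simp, ?_, ?_⟩
      · intro d hd
        rcases List.mem_cons.mp hd with h | h
        · omega
        · exact hl2 d h
      · rw [negCF_cons _ _ hl, hl3]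
        have hne : f ≠ 0 := hf
        have : (1 : ℚ) / t = -f := by
          rw [htdef]
          field_simp
        rw [this]
        have := Int.fract_add_floor s
        rw [← hfdef] at *
        linarith [Int.fract_add_floor s]

/-- For every rational number `s < -1` there exist a unique natural number `n` and
a unique finite sequence of integers `d₀, …, dₙ` with `dᵢ ≤ -2` for every `i`, such
that `s = [d₀, …, dₙ]` (encoded as a unique nonempty list of integers). -/
theorem negCF_exists_unique (s : ℚ) (hs : s < -1) :
    ∃! l : List ℤ, l ≠ [] ∧ (∀ d ∈ l, d ≤ -2) ∧ negCF l = s := by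
  obtain ⟨l, h1, h2, h3⟩ := negCF_exists s.den s le_rfl hs
  refine ⟨l, ⟨h1, h2, h3⟩, ?_⟩
  rintro l' ⟨h1', h2', h3'⟩
  exact negCF_unique l' l h1' h1 h2' h2 (by rw [h3, h3'])
end

section
/- Let r ∈ ℚ with 0 < r < 1, and let -1/r = [d_0, ..., d_n] be its negative continued fraction expansion with all d_i ≤ -2. Let t ∈ ℤ satisfy -1/r < t ≤ -1, and set r' = 1/(1/r + t + 1). Then 0 < r' < 1, and the negative continued fraction expansion of -1/r' is [d_0 − t − 1, d_1, ..., d_n]; that is, its coefficients are d_0' = d_0 − (t+1) and d_i' = d_i for i > 0, and all coefficients are ≤ -2. -/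
lemma negCF_le (d : ℤ) (l : List ℤ) (h : ∀ x ∈ d :: l, x ≤ -2) :
    negCF (d :: l) ≤ -1 := by
  induction l generalizing d with
  | nil =>
    have hd : d ≤ -2 := h d (by simp)
    have : (d : ℚ) ≤ -2 := by exact_mod_cast hd
    simp only [negCF]; linarith
  | cons e l ih =>
    have hd : d ≤ -2 := h d (by simp)
    have htail : negCF (e :: l) ≤ -1 := ih e (fun x hx => h x (by simp at hx ⊢; tauto))
    have hdq : (d : ℚ) ≤ -2 := by exact_mod_cast hd
    show (d : ℚ) - 1 / negCF (e :: l) ≤ -1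
    have hneg : negCF (e :: l) < 0 := by linarith
    have : 1 / negCF (e :: l) ≥ -1 := by
      rw [ge_iff_le, le_div_iff_of_neg hneg]; linarith
    linarith

lemma negCF_ge (d : ℤ) (l : List ℤ) (h : ∀ x ∈ d :: l, x ≤ -2) :
    (d : ℚ) ≤ negCF (d :: l) := by
  cases l with
  | nil => simp [negCF]
  | cons e l =>
    have htail : negCF (e :: l) ≤ -1 := negCF_le e l (fun x hx => h x (by simp at hx ⊢; tauto))
    have hneg : negCF (e :: l) < 0 := by linarith
    show (d : ℚ) ≤ (d : ℚ) - 1 / negCF (e :: l)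
    have : 1 / negCF (e :: l) ≤ 0 := le_of_lt (div_neg_of_pos_of_neg one_pos hneg)
    linarith

lemma negCF_shift_head (d c : ℤ) (l : List ℤ) :
    negCF ((d + c) :: l) = negCF (d :: l) + c := by
  cases l with
  | nil => show ((d + c : ℤ) : ℚ) = (d : ℚ) + c; push_cast; ring
  | cons e l =>
    show ((d + c : ℤ) : ℚ) - 1 / negCF (e :: l) = (d : ℚ) - 1 / negCF (e :: l) + c
    push_cast; ring

/-- Let `r ∈ ℚ` with `0 < r < 1`, and let `-1/r = [d₀, …, dₙ]` be its negative
continued fraction expansion with all `dᵢ ≤ -2`.  Let `t ∈ ℤ` satisfy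
`-1/r < t ≤ -1`, and set `r' = 1/(1/r + t + 1)`.  Then `0 < r' < 1`, and the
negative continued fraction expansion of `-1/r'` is `[d₀ - t - 1, d₁, …, dₙ]`,
all of whose coefficients are `≤ -2`. -/
theorem negCF_shift (r : ℚ) (hr0 : 0 < r) (hr1 : r < 1) (d : ℤ) (l : List ℤ)
    (hcoef : ∀ x ∈ d :: l, x ≤ -2) (hexp : -1 / r = negCF (d :: l))
    (t : ℤ) (ht0 : -1 / r < (t : ℚ)) (ht1 : t ≤ -1) :
    0 < 1 / (1 / r + t + 1) ∧ 1 / (1 / r + t + 1) < 1 ∧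
      -1 / (1 / (1 / r + t + 1)) = negCF ((d - t - 1) :: l) ∧
      (∀ x ∈ (d - t - 1) :: l, x ≤ -2) := by
  have hrne : r ≠ 0 := ne_of_gt hr0
  have hinv : -1 / r = -(1/r) := by ring
  have ht0' : -(1/r) < (t : ℚ) := by rw [← hinv]; exact ht0
  have ht1' : (t : ℚ) ≤ -1 := by exact_mod_cast ht1
  have hD : 1 < 1 / r + t + 1 := by
    have h1r : 1 < 1 / r := one_lt_one_div hr0 hr1
    -- need 1/r + t > 0 : from -(1/r) < t i.e. -t < 1/r
    linarith [ht0', ht1']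
  have hDpos : 0 < 1 / r + t + 1 := by linarith
  have hdlt : d < t := by
    have h1 : (d : ℚ) ≤ negCF (d :: l) := negCF_ge d l hcoef
    have h2 : (d : ℚ) < t := by rw [← hexp] at h1; linarith [ht0]
    exact_mod_cast h2
  refine ⟨div_pos one_pos hDpos, ?_, ?_, ?_⟩
  · rw [div_lt_one hDpos]; exact hD
  · have h1 : negCF ((d - t - 1) :: l) = negCF (d :: l) + ((-t - 1 : ℤ) : ℚ) := by
      have := negCF_shift_head d (-t - 1) l
      rw [show d + (-t - 1) = d - t - 1 by ring] at this
      exact this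
    rw [h1, ← hexp]
    have hXne : (1 / r + (t : ℚ) + 1) ≠ 0 := ne_of_gt hDpos
    field_simp
    push_cast
    ring
  · intro x hx
    simp only [List.mem_cons] at hx
    rcases hx with h | h
    · omega
    · exact hcoef x (by simp [h])
end
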